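/- Suppose X is a perfect Polish space (a nonempty Polish space with no isolated points), Γ is a group of homeomorphisms of X having a dense orbit (there is x₀ ∈ X with {γ(x₀) : γ ∈ Γ} dense in X), and R ⊆ X × X is a meager set. Then there exists a continuous injective map φ : 2^ℕ → X such that for all y, z ∈ 2^ℕ: if y E₀ z then there is γ ∈ Γ with γ(φ(y)) = φ(z), and if ¬(y E₀ z) then (φ(y), φ(z)) ∉ R. -/

import Mathlib

/-- `E₀`: eventual equality on Cantor space. -/
def E0 (x y : ℕ → Bool) : Prop := ∃ N : ℕ, ∀ n ≥ N, x n = y n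

/-- A group of homeomorphisms of `X`: a subgroup of the group of
self-homeomorphisms of `X` under composition. -/
def IsHomeoGroup {X : Type*} [TopologicalSpace X] (Γ : Set (X ≃ₜ X)) : Prop :=
  Homeomorph.refl X ∈ Γ ∧ (∀ γ ∈ Γ, γ.symm ∈ Γ) ∧
    ∀ γ₁ ∈ Γ, ∀ γ₂ ∈ Γ, γ₁.trans γ₂ ∈ Γ

open Set Metric Topology

namespace Stmt5Aux

variable {X : Type*} [MetricSpace X]

/-- `pw γ b`: `γ` if `b = true`, identity otherwise. -/
noncomputable def pw (γ : X ≃ₜ X) (b : Bool) : X ≃ₜ X := if b then γ else Homeomorph.refl X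

/-- Word maps: `Gm gam y n = γ₀^{y 0} ∘ ⋯` applied outermost-first. -/
noncomputable def Gm (gam : ℕ → X ≃ₜ X) (y : ℕ → Bool) : ℕ → X ≃ₜ X
  | 0 => Homeomorph.refl X
  | n + 1 => (pw (gam n) (y n)).trans (Gm gam y n)

lemma Gm_congr (gam gam' : ℕ → X ≃ₜ X) (y y' : ℕ → Bool) :
    ∀ n : ℕ, (∀ i < n, gam i = gam' i) → (∀ i < n, y i = y' i) →
      Gm gam y n = Gm gam' y' n
  | 0, _, _ => rfl
  | n + 1, h1, h2 => by
    have ih := Gm_congr gam gam' y y' n (fun i hi => h1 i (hi.trans n.lt_succ_self))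
      (fun i hi => h2 i (hi.trans n.lt_succ_self))
    simp [Gm, ih, h1 n n.lt_succ_self, h2 n n.lt_succ_self]

lemma Gm_apply (gam : ℕ → X ≃ₜ X) (y : ℕ → Bool) (n : ℕ) (x : X) :
    Gm gam y (n + 1) x = Gm gam y n (pw (gam n) (y n) x) := rfl

lemma Gm_mem {Γ : Set (X ≃ₜ X)} (hΓ : IsHomeoGroup Γ) (gam : ℕ → X ≃ₜ X)
    (hgam : ∀ i, gam i ∈ Γ) (y : ℕ → Bool) : ∀ n, Gm gam y n ∈ Γ
  | 0 => hΓ.1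
  | n + 1 => by
    have hpw : pw (gam n) (y n) ∈ Γ := by
      cases y n <;> simp [pw, hΓ.1, hgam n]
    exact hΓ.2.2 _ hpw _ (Gm_mem hΓ gam hgam y n)

/-- union of two closed sets with empty interior has empty interior -/
lemma nwd_union {Y : Type*} [TopologicalSpace Y] {A B : Set Y} (hA : IsClosed A) (hiA : interior A = ∅)
    (hiB : interior B = ∅) : interior (A ∪ B) = ∅ := by
  have h1 : interior (A ∪ B) \ A ⊆ interior B := by
    apply interior_maximal
    · intro x hx
      rcases interior_subset hx.1 with h | h
      · exact absurd h hx.2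
      · exact h
    · exact isOpen_interior.sdiff hA
  rw [hiB] at h1
  rw [subset_empty_iff, diff_eq_empty] at h1
  have h2 : interior (A ∪ B) ⊆ interior A := interior_maximal h1 isOpen_interior
  rw [hiA] at h2
  exact eq_empty_iff_forall_notMem.2 fun x hx => h2 hx

/-- Shrinking a pair of open sets to make an image rectangle avoid a closed set
with empty interior. -/
lemma shrink_pair {F : Set (X × X)} (hFc : IsClosed F) (hFi : interior F = ∅)
    (g h : X ≃ₜ X) {U V : Set X} (hU : IsOpen U) (hUne : U.Nonempty)
    (hV : IsOpen V) (hVne : V.Nonempty) :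
    ∃ U' V' : Set X, IsOpen U' ∧ U'.Nonempty ∧ U' ⊆ U ∧ IsOpen V' ∧ V'.Nonempty ∧ V' ⊆ V ∧
      ∀ a ∈ U', ∀ b ∈ V', (g a, h b) ∉ F := by
  have hd : Dense Fᶜ := by
    rwa [← interior_eq_empty_iff_dense_compl]
  set m : X × X ≃ₜ X × X := g.prodCongr h with hm
  have hopen : IsOpen (m '' (U ×ˢ V)) := m.isOpenMap _ (hU.prod hV)
  have hne : (m '' (U ×ˢ V)).Nonempty := (hUne.prod hVne).image _
  obtain ⟨p, hp1, hp2⟩ := hd.inter_open_nonempty _ hopen hne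
  obtain ⟨q, hq, hqp⟩ := hp1
  -- q ∈ U ×ˢ V, m q ∉ F
  have hOopen : IsOpen ((U ×ˢ V) ∩ m ⁻¹' Fᶜ) := (hU.prod hV).inter (hFc.isOpen_compl.preimage m.continuous)
  have hqO : q ∈ (U ×ˢ V) ∩ m ⁻¹' Fᶜ := ⟨hq, by rw [mem_preimage, hqp]; exact hp2⟩
  rcases isOpen_prod_iff.1 hOopen q.1 q.2 (by simpa using hqO) with
    ⟨u, v, hu, hv, hq1, hq2, huv⟩
  refine ⟨u, v, hu, ⟨q.1, hq1⟩, ?_, hv, ⟨q.2, hq2⟩, ?_, ?_⟩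
  · intro a ha
    exact (huv (mk_mem_prod ha hq2)).1.1
  · intro b hb
    exact (huv (mk_mem_prod hq1 hb)).1.2
  · intro a ha b hb
    have := (huv (mk_mem_prod ha hb)).2
    simpa [hm, Homeomorph.prodCongr] using this

/-- Iterated shrinking along a list of (g, h, F) triples. -/
lemma shrink_list (L : List ((X ≃ₜ X) × (X ≃ₜ X) × Set (X × X)))
    (hL : ∀ p ∈ L, IsClosed p.2.2 ∧ interior p.2.2 = ∅) :
    ∀ {U V : Set X}, IsOpen U → U.Nonempty → IsOpen V → V.Nonempty →
    ∃ U' V' : Set X, IsOpen U' ∧ U'.Nonempty ∧ U' ⊆ U ∧ IsOpen V' ∧ V'.Nonempty ∧ V' ⊆ V ∧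
      ∀ p ∈ L, ∀ a ∈ U', ∀ b ∈ V', (p.1 a, p.2.1 b) ∉ p.2.2 := by
  induction L with
  | nil =>
    intro U V hU hUne hV hVne
    exact ⟨U, V, hU, hUne, subset_rfl, hV, hVne, subset_rfl, by simp⟩
  | cons p L ih =>
    intro U V hU hUne hV hVne
    obtain ⟨U₁, V₁, hU₁, hU₁ne, hU₁s, hV₁, hV₁ne, hV₁s, h₁⟩ :=
      ih (fun q hq => hL q (List.mem_cons_of_mem _ hq)) hU hUne hV hVne
    obtain ⟨hFc, hFi⟩ := hL p (List.mem_cons_self)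
    obtain ⟨U₂, V₂, hU₂, hU₂ne, hU₂s, hV₂, hV₂ne, hV₂s, h₂⟩ :=
      shrink_pair hFc hFi p.1 p.2.1 hU₁ hU₁ne hV₁ hV₁ne
    refine ⟨U₂, V₂, hU₂, hU₂ne, hU₂s.trans hU₁s, hV₂, hV₂ne, hV₂s.trans hV₁s, ?_⟩
    intro q hq a ha b hb
    rcases List.mem_cons.1 hq with rfl | hq
    · exact h₂ a ha b hb
    · exact h₁ q hq a (hU₂s ha) b (hV₂s hb)

/-- Common modulus of continuity at a point for a list of continuous maps. -/
lemma cont_list (L : List (X → X)) (hL : ∀ f ∈ L, Continuous f) (x : X)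
    {ε : ℝ} (hε : 0 < ε) :
    ∃ δ > 0, ∀ f ∈ L, ∀ a, dist a x ≤ δ → dist (f a) (f x) < ε := by
  induction L with
  | nil => exact ⟨1, one_pos, by simp⟩
  | cons f L ih =>
    obtain ⟨δ₁, hδ₁, h₁⟩ := ih fun g hg => hL g (List.mem_cons_of_mem _ hg)
    have hf : Continuous f := hL f (List.mem_cons_self)
    obtain ⟨δ₂, hδ₂, h₂⟩ :=
      Metric.continuous_iff.1 hf x ε hε
    refine ⟨min δ₁ (δ₂ / 2), lt_min hδ₁ (half_pos hδ₂), ?_⟩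
    intro g hg a ha
    rcases List.mem_cons.1 hg with rfl | hg
    · exact h₂ a (lt_of_le_of_lt (ha.trans (min_le_right _ _)) (half_lt_self hδ₂))
    · exact h₁ g hg a (ha.trans (min_le_left _ _))

/-- Topological transitivity from a dense orbit. -/
lemma trans_lemma {Γ : Set (X ≃ₜ X)} (hΓ : IsHomeoGroup Γ)
    (hdense : ∃ x₀ : X, Dense {y : X | ∃ γ ∈ Γ, γ x₀ = y})
    {U V : Set X} (hU : IsOpen U) (hUne : U.Nonempty) (hV : IsOpen V) (hVne : V.Nonempty) :
    ∃ γ ∈ Γ, ∃ x ∈ U, γ x ∈ V := by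
  obtain ⟨x₀, hx₀⟩ := hdense
  obtain ⟨p, hp1, hp2⟩ := hx₀.inter_open_nonempty U hU hUne
  obtain ⟨γ₁, hγ₁, rfl⟩ := hp2
  obtain ⟨q, hq1, hq2⟩ := hx₀.inter_open_nonempty V hV hVne
  obtain ⟨γ₂, hγ₂, rfl⟩ := hq2
  refine ⟨γ₁.symm.trans γ₂, hΓ.2.2 _ (hΓ.2.1 _ hγ₁) _ hγ₂, γ₁ x₀, hp1, ?_⟩
  simpa using hq1

/-- In a space without isolated points, every nonempty open set contains two
disjoint nonempty open subsets. -/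
lemma two_opens (hperf : ∀ x : X, ¬ IsOpen ({x} : Set X))
    {U : Set X} (hU : IsOpen U) (hne : U.Nonempty) :
    ∃ V W : Set X, IsOpen V ∧ V.Nonempty ∧ V ⊆ U ∧ IsOpen W ∧ W.Nonempty ∧ W ⊆ U ∧
      V ∩ W = ∅ := by
  obtain ⟨a, ha⟩ := hne
  have : ∃ b ∈ U, b ≠ a := by
    by_contra h
    push_neg at h
    have : U = {a} := subset_antisymm (fun x hx => h x hx) (by simpa using ha)
    exact hperf a (this ▸ hU)
  obtain ⟨b, hb, hba⟩ := this
  have hr : 0 < dist a b / 2 := by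
    have : 0 < dist a b := dist_pos.2 (Ne.symm hba)
    linarith
  refine ⟨U ∩ ball a (dist a b / 2), U ∩ ball b (dist a b / 2),
    hU.inter isOpen_ball, ⟨a, ha, by simpa using hr⟩, inter_subset_left,
    hU.inter isOpen_ball, ⟨b, hb, by simpa using hr⟩, inter_subset_left, ?_⟩
  rw [eq_empty_iff_forall_notMem]
  rintro x ⟨⟨-, hx1⟩, -, hx2⟩
  have := dist_triangle a x b
  rw [mem_ball, dist_comm] at hx1
  rw [mem_ball] at hx2
  linarith

/-- The relation guaranteed at each construction step. -/
def Props (Γ : Set (X ≃ₜ X)) (F : Set (X × X)) (n : ℕ) (gam : ℕ → X ≃ₜ X)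
    (U : Set X) (γ : X ≃ₜ X) (U' : Set X) : Prop :=
  γ ∈ Γ ∧ IsOpen U' ∧ U'.Nonempty ∧ closure U' ⊆ U ∧ γ '' closure U' ⊆ U ∧
    (γ '' closure U') ∩ closure U' = ∅ ∧
    (∀ y : ℕ → Bool, ∀ a ∈ closure U', ∀ b ∈ closure U',
      dist (Gm (Function.update gam n γ) y (n+1) a)
        (Gm (Function.update gam n γ) y (n+1) b) ≤ (1/2 : ℝ)^n) ∧
    (∀ y z : ℕ → Bool, y n ≠ z n → ∀ a ∈ closure U', ∀ b ∈ closure U',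
      (Gm (Function.update gam n γ) y (n+1) a,
        Gm (Function.update gam n γ) z (n+1) b) ∉ F)

lemma Gm_update_succ (gam : ℕ → X ≃ₜ X) (γ : X ≃ₜ X) (n : ℕ) (y : ℕ → Bool) (a : X) :
    Gm (Function.update gam n γ) y (n+1) a = Gm gam y n (pw γ (y n) a) := by
  have h1 : Gm (Function.update gam n γ) y n = Gm gam y n :=
    Gm_congr _ _ _ _ n (fun i hi => Function.update_of_ne hi.ne γ gam) (fun _ _ => rfl)
  rw [Gm_apply, h1, Function.update_self]

lemma keyStep {Γ : Set (X ≃ₜ X)} (hΓ : IsHomeoGroup Γ)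
    (hdense : ∃ x₀ : X, Dense {y : X | ∃ γ ∈ Γ, γ x₀ = y})
    (hperf : ∀ x : X, ¬ IsOpen ({x} : Set X))
    (F : Set (X × X)) (hFc : IsClosed F) (hFi : interior F = ∅)
    (n : ℕ) (gam : ℕ → X ≃ₜ X) (U : Set X) (hU : IsOpen U) (hne : U.Nonempty) :
    ∃ q : (X ≃ₜ X) × Set X, Props Γ F n gam U q.1 q.2 := by
  classical
  set ext : ∀ m : ℕ, (Fin m → Bool) → (ℕ → Bool) :=
    fun m s i => if h : i < m then s ⟨i, h⟩ else false with hext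
  obtain ⟨V₀, W₀, hV₀, hV₀ne, hV₀s, hW₀, hW₀ne, hW₀s, hVW₀⟩ := two_opens hperf hU hne
  set A : List ((Fin n → Bool) × (Fin n → Bool)) :=
    (Finset.univ (α := (Fin n → Bool) × (Fin n → Bool))).toList with hA
  set L : List ((X ≃ₜ X) × (X ≃ₜ X) × Set (X × X)) :=
    (A.map fun p => (Gm gam (ext n p.1) n, Gm gam (ext n p.2) n, F)) ++
    (A.map fun p => (Gm gam (ext n p.1) n, Gm gam (ext n p.2) n, Prod.swap ⁻¹' F)) with hL
  have hFswap_c : IsClosed (Prod.swap ⁻¹' F : Set (X × X)) :=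
    hFc.preimage continuous_swap
  have hFswap_i : interior (Prod.swap ⁻¹' F : Set (X × X)) = ∅ := by
    have h := ((Homeomorph.prodComm X X).preimage_interior F).symm
    simp only [Homeomorph.coe_prodComm] at h
    rw [h, hFi, preimage_empty]
  have hLgood : ∀ p ∈ L, IsClosed p.2.2 ∧ interior p.2.2 = ∅ := by
    intro p hp
    rcases List.mem_append.1 hp with hp | hp <;>
      · obtain ⟨q, -, rfl⟩ := List.mem_map.1 hp
        first
          | exact ⟨hFc, hFi⟩
          | exact ⟨hFswap_c, hFswap_i⟩
  obtain ⟨V, W, hV, hVne, hVs, hW, hWne, hWs, hLprop⟩ :=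
    shrink_list L hLgood hV₀ hV₀ne hW₀ hW₀ne
  have hVW : V ∩ W = ∅ :=
    eq_empty_of_subset_empty (hVW₀ ▸ inter_subset_inter hVs hWs)
  obtain ⟨γ, hγΓ, x, hxV, hγxW⟩ := trans_lemma hΓ hdense hV hVne hW hWne
  set fs : List (X → X) := ((Finset.univ (α := Fin (n+1) → Bool)).toList).map
    (fun j => ⇑(Gm (Function.update gam n γ) (ext (n+1) j) (n+1))) with hfsdef
  have hfs : ∀ f ∈ fs, Continuous f := by
    intro f hf
    obtain ⟨j, -, rfl⟩ := List.mem_map.1 hf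
    exact (Gm (Function.update gam n γ) (ext (n+1) j) (n+1)).continuous
  have hεpos : (0:ℝ) < (1/2)^(n+1) := by positivity
  obtain ⟨δ, hδ, hδp⟩ := cont_list fs hfs x hεpos
  have hxmem : x ∈ V ∩ γ ⁻¹' W := ⟨hxV, hγxW⟩
  obtain ⟨ρ, hρ, hρb⟩ :=
    Metric.isOpen_iff.1 (hV.inter (hW.preimage γ.continuous)) x hxmem
  set r := min δ ρ / 2 with hr
  have hrpos : 0 < r := half_pos (lt_min hδ hρ)
  have hrρ : r < ρ := by
    have := min_le_right δ ρ
    rw [hr]; linarith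
  have hrδ : r ≤ δ := by
    have := min_le_left δ ρ
    rw [hr]; linarith
  have hclsub : closure (ball x r) ⊆ ball x ρ :=
    closure_ball_subset_closedBall.trans (closedBall_subset_ball hrρ)
  have hclV : closure (ball x r) ⊆ V := fun a ha => (hρb (hclsub ha)).1
  have hclW : γ '' closure (ball x r) ⊆ W := by
    rintro _ ⟨a, ha, rfl⟩
    exact (hρb (hclsub ha)).2
  have hcl_dist : ∀ a ∈ closure (ball x r), dist a x ≤ δ := fun a ha =>
    (mem_closedBall.1 (closure_ball_subset_closedBall ha)).trans hrδ
  refine ⟨(γ, ball x r), hγΓ, isOpen_ball, ⟨x, mem_ball_self hrpos⟩,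
    hclV.trans (hVs.trans hV₀s), hclW.trans (hWs.trans hW₀s), ?_, ?_, ?_⟩
  · rw [eq_empty_iff_forall_notMem]
    rintro p ⟨hp1, hp2⟩
    exact eq_empty_iff_forall_notMem.1 hVW p ⟨hclV hp2, hclW hp1⟩
  · -- distance bound
    intro y a ha b hb
    have hcongr : Gm (Function.update gam n γ) y (n+1) =
        Gm (Function.update gam n γ) (ext (n+1) (fun i : Fin (n+1) => y i)) (n+1) :=
      Gm_congr _ _ _ _ _ (fun _ _ => rfl) (fun i hi => by simp [hext, hi])
    have hmem : ⇑(Gm (Function.update gam n γ) y (n+1)) ∈ fs := by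
      rw [hcongr, hfsdef]
      exact List.mem_map.2 ⟨fun i : Fin (n+1) => y i,
        Finset.mem_toList.2 (Finset.mem_univ _), rfl⟩
    have h1 := hδp _ hmem a (hcl_dist a ha)
    have h2 := hδp _ hmem b (hcl_dist b hb)
    have h3 := dist_triangle_right (Gm (Function.update gam n γ) y (n+1) a)
      (Gm (Function.update gam n γ) y (n+1) b) (Gm (Function.update gam n γ) y (n+1) x)
    have h4 : (1/2 : ℝ)^(n+1) + (1/2 : ℝ)^(n+1) = (1/2 : ℝ)^n := by ring
    linarith
  · -- avoiding F
    intro y z hyz a ha b hb hmemF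
    rw [Gm_update_succ gam γ n y a, Gm_update_succ gam γ n z b] at hmemF
    have hy' : Gm gam y n = Gm gam (ext n (fun i : Fin n => y i)) n :=
      Gm_congr _ _ _ _ _ (fun _ _ => rfl) (fun i hi => by simp [hext, hi])
    have hz' : Gm gam z n = Gm gam (ext n (fun i : Fin n => z i)) n :=
      Gm_congr _ _ _ _ _ (fun _ _ => rfl) (fun i hi => by simp [hext, hi])
    rw [hy', hz'] at hmemF
    have haV : a ∈ V := hclV ha
    have hbV : b ∈ V := hclV hb
    have haW : γ a ∈ W := hclW ⟨a, ha, rfl⟩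
    have hbW : γ b ∈ W := hclW ⟨b, hb, rfl⟩
    cases hb1 : y n <;> cases hb2 : z n <;> rw [hb1, hb2] at hmemF
    · exact hyz (hb1.trans hb2.symm)
    · -- y n = false, z n = true
      simp only [pw, if_false, Bool.false_eq_true, if_true, Homeomorph.refl_apply] at hmemF
      have htri : (Gm gam (ext n (fun i : Fin n => y i)) n,
          Gm gam (ext n (fun i : Fin n => z i)) n, F) ∈ L := by
        rw [hL]
        exact List.mem_append_left _
          (List.mem_map.2 ⟨(fun i : Fin n => y i, fun i : Fin n => z i),
            Finset.mem_toList.2 (Finset.mem_univ _), rfl⟩)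
      exact hLprop _ htri a haV (γ b) hbW hmemF
    · -- y n = true, z n = false
      simp only [pw, if_false, Bool.false_eq_true, if_true, Homeomorph.refl_apply] at hmemF
      have htri : (Gm gam (ext n (fun i : Fin n => z i)) n,
          Gm gam (ext n (fun i : Fin n => y i)) n, Prod.swap ⁻¹' F) ∈ L := by
        rw [hL]
        exact List.mem_append_right _
          (List.mem_map.2 ⟨(fun i : Fin n => z i, fun i : Fin n => y i),
            Finset.mem_toList.2 (Finset.mem_univ _), rfl⟩)
      exact hLprop _ htri b hbV (γ a) haW (by simpa [Set.mem_preimage] using hmemF)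
    · exact hyz (hb1.trans hb2.symm)

lemma construction {Γ : Set (X ≃ₜ X)} (hΓ : IsHomeoGroup Γ)
    (hdense : ∃ x₀ : X, Dense {y : X | ∃ γ ∈ Γ, γ x₀ = y})
    (hperf : ∀ x : X, ¬ IsOpen ({x} : Set X)) [Nonempty X]
    (Fs : ℕ → Set (X × X)) (hFc : ∀ n, IsClosed (Fs n)) (hFi : ∀ n, interior (Fs n) = ∅) :
    ∃ (U : ℕ → Set X) (gam : ℕ → X ≃ₜ X),
      (∀ n, IsOpen (U n)) ∧ (∀ n, (U n).Nonempty) ∧ (∀ n, gam n ∈ Γ) ∧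
      (∀ n, closure (U (n+1)) ⊆ U n) ∧ (∀ n, gam n '' closure (U (n+1)) ⊆ U n) ∧
      (∀ n, (gam n '' closure (U (n+1))) ∩ closure (U (n+1)) = ∅) ∧
      (∀ n, ∀ y : ℕ → Bool, ∀ a ∈ closure (U (n+1)), ∀ b ∈ closure (U (n+1)),
        dist (Gm gam y (n+1) a) (Gm gam y (n+1) b) ≤ (1/2 : ℝ)^n) ∧
      (∀ n, ∀ y z : ℕ → Bool, y n ≠ z n → ∀ a ∈ closure (U (n+1)), ∀ b ∈ closure (U (n+1)),
        (Gm gam y (n+1) a, Gm gam z (n+1) b) ∉ Fs n) := by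
  classical
  have key : ∀ (n : ℕ) (s : {p : Set X × (ℕ → X ≃ₜ X) // IsOpen p.1 ∧ p.1.Nonempty}),
      ∃ q : (X ≃ₜ X) × Set X, Props Γ (Fs n) n s.1.2 s.1.1 q.1 q.2 :=
    fun n s => keyStep hΓ hdense hperf (Fs n) (hFc n) (hFi n) n s.1.2 s.1.1 s.2.1 s.2.2
  let next : ∀ n : ℕ, {p : Set X × (ℕ → X ≃ₜ X) // IsOpen p.1 ∧ p.1.Nonempty} →
      {p : Set X × (ℕ → X ≃ₜ X) // IsOpen p.1 ∧ p.1.Nonempty} := fun n s =>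
    ⟨((key n s).choose.2, Function.update s.1.2 n (key n s).choose.1),
      (key n s).choose_spec.2.1, (key n s).choose_spec.2.2.1⟩
  let chain : ℕ → {p : Set X × (ℕ → X ≃ₜ X) // IsOpen p.1 ∧ p.1.Nonempty} := fun n => Nat.rec
    ⟨(univ, fun _ => Homeomorph.refl X), isOpen_univ, univ_nonempty⟩ next n
  have chain_succ : ∀ n, chain (n+1) = next n (chain n) := fun n => rfl
  set U : ℕ → Set X := fun n => (chain n).1.1 with hUdef
  set gam : ℕ → X ≃ₜ X := fun n => (chain (n+1)).1.2 n with hgamdef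
  have hgam_eq : ∀ n, gam n = (key n (chain n)).choose.1 := by
    intro n
    show (chain (n+1)).1.2 n = _
    rw [chain_succ n]
    exact Function.update_self _ _ _
  have hU_succ : ∀ n, U (n+1) = (key n (chain n)).choose.2 := fun n => by
    show (chain (n+1)).1.1 = _
    rw [chain_succ n]
  have hstab : ∀ n, ∀ i < n, (chain n).1.2 i = gam i := by
    intro n
    induction n with
    | zero => intro i hi; omega
    | succ n ih =>
      intro i hi
      rcases Nat.lt_succ_iff_lt_or_eq.1 hi with hi' | rfl
      · rw [chain_succ n]
        show Function.update (chain n).1.2 n (key n (chain n)).choose.1 i = gam i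
        rw [Function.update_of_ne hi'.ne]
        exact ih i hi'
      · rfl
  have hGmeq : ∀ n (y : ℕ → Bool),
      Gm (Function.update (chain n).1.2 n (key n (chain n)).choose.1) y (n+1) =
        Gm gam y (n+1) := by
    intro n y
    apply Gm_congr
    · intro i hi
      rcases Nat.lt_succ_iff_lt_or_eq.1 hi with hi' | rfl
      · rw [Function.update_of_ne hi'.ne]
        exact hstab n i hi'
      · rw [Function.update_self]
        exact (hgam_eq i).symm
    · intro _ _; rfl
  refine ⟨U, gam, fun n => (chain n).2.1, fun n => (chain n).2.2, ?_, ?_, ?_, ?_, ?_, ?_⟩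
  · intro n
    rw [hgam_eq n]
    exact (key n (chain n)).choose_spec.1
  · intro n
    rw [hU_succ n]
    exact (key n (chain n)).choose_spec.2.2.2.1
  · intro n
    rw [hgam_eq n, hU_succ n]
    exact (key n (chain n)).choose_spec.2.2.2.2.1
  · intro n
    rw [hgam_eq n, hU_succ n]
    exact (key n (chain n)).choose_spec.2.2.2.2.2.1
  · intro n y a ha b hb
    rw [hU_succ n] at ha hb
    have := (key n (chain n)).choose_spec.2.2.2.2.2.2.1 y a ha b hb
    rwa [hGmeq n y] at this
  · intro n y z hyz a ha b hb
    rw [hU_succ n] at ha hb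
    have := (key n (chain n)).choose_spec.2.2.2.2.2.2.2 y z hyz a ha b hb
    rwa [hGmeq n y, hGmeq n z] at this

end Stmt5Aux

open Stmt5Aux

/-- if `X` is a perfect Polish space, `Γ` is a group of
homeomorphisms of `X` with a dense orbit, and `R ⊆ X × X` is meager, then there
is a continuous injective homomorphism from `(E₀, ∼E₀)` to `(E_Γ, ∼R)`. -/
theorem stmt_5 {X : Type*} [TopologicalSpace X] [PolishSpace X] [Nonempty X]
    (hperf : ∀ x : X, ¬ IsOpen ({x} : Set X))
    (Γ : Set (X ≃ₜ X)) (hΓ : IsHomeoGroup Γ)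
    (hdense : ∃ x₀ : X, Dense {y : X | ∃ γ ∈ Γ, γ x₀ = y})
    (R : Set (X × X)) (hR : IsMeagre R) :
    ∃ φ : (ℕ → Bool) → X, Continuous φ ∧ Function.Injective φ ∧
      ∀ y z : ℕ → Bool,
        (E0 y z → ∃ γ ∈ Γ, γ (φ y) = φ z) ∧
        (¬ E0 y z → (φ y, φ z) ∉ R) := by
  classical
  letI := TopologicalSpace.upgradeIsCompletelyMetrizable X
  -- decompose the meager set into an increasing sequence of closed nwd sets
  obtain ⟨S, hSnwd, hScnt, hSsub⟩ := isMeagre_iff_countable_union_isNowhereDense.1 hR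
  have hS'cnt : (insert (∅ : Set (X × X)) S).Countable := hScnt.insert _
  obtain ⟨f, hf⟩ := hS'cnt.exists_eq_range ⟨∅, Set.mem_insert _ _⟩
  have hfnwd : ∀ k, IsNowhereDense (f k) := by
    intro k
    have hmem : f k ∈ insert (∅ : Set (X × X)) S := hf ▸ Set.mem_range_self k
    rcases Set.mem_insert_iff.1 hmem with h | h
    · rw [h]; simp [IsNowhereDense]
    · exact hSnwd _ h
  set T : ℕ → Set (X × X) := fun k => closure (f k) with hT
  have hTc : ∀ k, IsClosed (T k) := fun k => isClosed_closure
  have hTi : ∀ k, interior (T k) = ∅ := fun k => hfnwd k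
  set Fs : ℕ → Set (X × X) := fun n => Nat.rec (T 0) (fun k Fk => Fk ∪ T (k+1)) n with hFs
  have hFs_succ : ∀ n, Fs (n+1) = Fs n ∪ T (n+1) := fun n => rfl
  have hFsc : ∀ n, IsClosed (Fs n) := by
    intro n
    induction n with
    | zero => exact hTc 0
    | succ n ih => rw [hFs_succ]; exact ih.union (hTc _)
  have hFsi : ∀ n, interior (Fs n) = ∅ := by
    intro n
    induction n with
    | zero => exact hTi 0
    | succ n ih => rw [hFs_succ]; exact nwd_union (hFsc n) ih (hTi _)
  have hTsub : ∀ k n, k ≤ n → T k ⊆ Fs n := by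
    intro k n hkn
    induction n with
    | zero =>
      have : k = 0 := Nat.le_zero.1 hkn
      subst this; exact subset_rfl
    | succ n ih =>
      rcases Nat.lt_succ_iff_lt_or_eq.1 (Nat.lt_succ_of_le hkn) with h | rfl
      · rw [hFs_succ]
        exact (ih (Nat.lt_succ_iff.1 h)).trans Set.subset_union_left
      · rw [hFs_succ]
        exact Set.subset_union_right
  -- run the construction
  obtain ⟨U, gam, hUopen, hUne, hgamΓ, hsub, hγsub, hdisj, hdist, havoid⟩ :=
    construction hΓ hdense hperf Fs hFsc hFsi
  set G : (ℕ → Bool) → ℕ → (X ≃ₜ X) := fun y n => Gm gam y n with hG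
  set K : (ℕ → Bool) → ℕ → Set X := fun y n => G y n '' closure (U n) with hK
  have hKclosed : ∀ y n, IsClosed (K y n) :=
    fun y n => ((G y n).isClosedMap) _ isClosed_closure
  have hKnested : ∀ y n, K y (n+1) ⊆ K y n := by
    rintro y n _ ⟨a, ha, rfl⟩
    rw [show G y (n+1) a = G y n (pw (gam n) (y n) a) from rfl]
    refine ⟨pw (gam n) (y n) a, ?_, rfl⟩
    cases hb : y n
    · simpa [pw] using subset_closure (hsub n ha)
    · simpa [pw] using subset_closure (hγsub n ⟨a, ha, rfl⟩)
  have hKmono : ∀ y n m, n ≤ m → K y m ⊆ K y n := by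
    intro y n m h
    induction m, h using Nat.le_induction with
    | base => exact subset_rfl
    | succ m hm ih => exact (hKnested y m).trans ih
  have hdistK : ∀ (w : ℕ → Bool) n p q, p ∈ K w (n+1) → q ∈ K w (n+1) →
      dist p q ≤ (1/2 : ℝ)^n := by
    rintro w n p q ⟨a, ha, rfl⟩ ⟨b, hb, rfl⟩
    exact hdist n w a ha b hb
  have hGpre : ∀ (y z : ℕ → Bool) n, (∀ i < n, y i = z i) → G y n = G z n :=
    fun y z n h => Gm_congr _ _ _ _ n (fun _ _ => rfl) h
  -- the approximating sequence and its limit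
  set c : (ℕ → Bool) → ℕ → X := fun y n => G y n ((hUne n).choose) with hc
  have hc_mem : ∀ y n, c y n ∈ K y n :=
    fun y n => ⟨_, subset_closure (hUne n).choose_spec, rfl⟩
  have hcauchy : ∀ y, CauchySeq (c y) := by
    intro y
    rw [Metric.cauchySeq_iff']
    intro ε hε
    obtain ⟨n, hn⟩ := exists_pow_lt_of_lt_one hε (by norm_num : (1/2 : ℝ) < 1)
    refine ⟨n+1, fun m hm => ?_⟩
    have h1 : c y m ∈ K y (n+1) := hKmono y (n+1) m hm (hc_mem y m)
    exact lt_of_le_of_lt (hdistK y n _ _ h1 (hc_mem y (n+1))) hn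
  have hlim : ∀ y, ∃ l, Filter.Tendsto (c y) Filter.atTop (nhds l) :=
    fun y => cauchySeq_tendsto_of_complete (hcauchy y)
  set φ : (ℕ → Bool) → X := fun y => (hlim y).choose with hφdef
  have hφt : ∀ y, Filter.Tendsto (c y) Filter.atTop (nhds (φ y)) :=
    fun y => (hlim y).choose_spec
  have hφK : ∀ y n, φ y ∈ K y n := by
    intro y n
    refine (hKclosed y n).mem_of_tendsto (hφt y) ?_
    exact Filter.eventually_atTop.2 ⟨n, fun m hm => hKmono y n m hm (hc_mem y m)⟩
  -- continuity
  have hcont : Continuous φ := by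
    rw [continuous_iff_continuousAt]
    intro y
    rw [ContinuousAt, Metric.tendsto_nhds]
    intro ε hε
    obtain ⟨n, hn⟩ := exists_pow_lt_of_lt_one hε (by norm_num : (1/2 : ℝ) < 1)
    have hopen : IsOpen {z : ℕ → Bool | ∀ i < n+1, z i = y i} := by
      have heq : {z : ℕ → Bool | ∀ i < n+1, z i = y i} =
          ⋂ i ∈ Finset.range (n+1), ((fun z : ℕ → Bool => z i) ⁻¹' {y i}) := by
        ext z
        simp [Set.mem_iInter]
      rw [heq]
      exact isOpen_biInter_finset fun i _ =>
        (continuous_apply i).isOpen_preimage _ (isOpen_discrete _)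
    have hymem : y ∈ {z : ℕ → Bool | ∀ i < n+1, z i = y i} := fun _ _ => rfl
    filter_upwards [hopen.mem_nhds hymem] with z hz
    have hKeq : K z (n+1) = K y (n+1) := by
      rw [hK]
      simp only
      rw [hGpre z y (n+1) hz]
    have h1 : φ z ∈ K y (n+1) := hKeq ▸ hφK z (n+1)
    exact lt_of_le_of_lt (hdistK y n _ _ h1 (hφK y (n+1))) hn
  -- injectivity
  have hinj : Function.Injective φ := by
    intro y z hyz
    by_contra hne'
    have hex : ∃ i, y i ≠ z i := by
      by_contra h
      push_neg at h
      exact hne' (funext h)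
    have hi : y (Nat.find hex) ≠ z (Nat.find hex) := Nat.find_spec hex
    set i := Nat.find hex with hidef
    have hpre : ∀ j < i, y j = z j := fun j hj => not_not.1 (Nat.find_min hex hj)
    obtain ⟨a, ha, hae⟩ := hφK y (i+1)
    obtain ⟨b, hb, hbe⟩ := hφK z (i+1)
    have hGi : G z i = G y i := hGpre z y i (fun j hj => (hpre j hj).symm)
    have heq0 : G y i (pw (gam i) (y i) a) = G y i (pw (gam i) (z i) b) := by
      rw [show G y i (pw (gam i) (y i) a) = G y (i+1) a from rfl, hae, hyz, ← hbe,
        show G z (i+1) b = G z i (pw (gam i) (z i) b) from rfl, hGi]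
    have heq : pw (gam i) (y i) a = pw (gam i) (z i) b := (G y i).injective heq0
    cases hb1 : y i <;> cases hb2 : z i <;> rw [hb1, hb2] at heq
    · exact hi (hb1.trans hb2.symm)
    · simp only [pw, if_false, Bool.false_eq_true, if_true, Homeomorph.refl_apply] at heq
      exact Set.eq_empty_iff_forall_notMem.1 (hdisj i) a ⟨⟨b, hb, heq.symm⟩, ha⟩
    · simp only [pw, if_false, Bool.false_eq_true, if_true, Homeomorph.refl_apply] at heq
      exact Set.eq_empty_iff_forall_notMem.1 (hdisj i) b ⟨⟨a, ha, heq⟩, hb⟩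
    · exact hi (hb1.trans hb2.symm)
  refine ⟨φ, hcont, hinj, ?_⟩
  intro y z
  constructor
  · rintro ⟨N, hN⟩
    have hGy : G y N ∈ Γ := Gm_mem hΓ gam hgamΓ y N
    have hGz : G z N ∈ Γ := Gm_mem hΓ gam hgamΓ z N
    refine ⟨(G y N).symm.trans (G z N), hΓ.2.2 _ (hΓ.2.1 _ hGy) _ hGz, ?_⟩
    have htail : ∀ m, N ≤ m → ∀ x : X, (G y N).symm (G y m x) = (G z N).symm (G z m x) := by
      intro m hm
      induction m, hm using Nat.le_induction with
      | base => intro x; simp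
      | succ m hm ih =>
        intro x
        rw [show G y (m+1) x = G y m (pw (gam m) (y m) x) from rfl,
          show G z (m+1) x = G z m (pw (gam m) (z m) x) from rfl, hN m hm]
        exact ih _
    have l1 : Filter.Tendsto (fun m => (G y N).symm (c y m)) Filter.atTop
        (nhds ((G y N).symm (φ y))) := ((G y N).symm.continuous.tendsto _).comp (hφt y)
    have l2 : Filter.Tendsto (fun m => (G z N).symm (c z m)) Filter.atTop
        (nhds ((G z N).symm (φ z))) := ((G z N).symm.continuous.tendsto _).comp (hφt z)
    have hev : (fun m => (G y N).symm (c y m)) =ᶠ[Filter.atTop]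
        (fun m => (G z N).symm (c z m)) :=
      Filter.eventually_atTop.2 ⟨N, fun m hm => htail m hm _⟩
    have heq : (G y N).symm (φ y) = (G z N).symm (φ z) :=
      tendsto_nhds_unique_of_eventuallyEq l1 l2 hev
    show (G z N) ((G y N).symm (φ y)) = φ z
    rw [heq]
    simp
  · intro hNE hmem
    have h1 : (φ y, φ z) ∈ ⋃₀ (insert (∅ : Set (X × X)) S) := by
      obtain ⟨t, ht, hmt⟩ := hSsub hmem
      exact ⟨t, Set.mem_insert_of_mem _ ht, hmt⟩
    obtain ⟨t, ht, hmt⟩ := h1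
    have : t ∈ Set.range f := hf ▸ ht
    obtain ⟨k, rfl⟩ := this
    have hex : ∃ n, k ≤ n ∧ y n ≠ z n := by
      by_contra h
      push_neg at h
      exact hNE ⟨k, fun n hn => h n hn⟩
    obtain ⟨n, hnk, hnne⟩ := hex
    have hmem' : (φ y, φ z) ∈ Fs n := hTsub k n hnk (subset_closure hmt)
    obtain ⟨a, ha, hae⟩ := hφK y (n+1)
    obtain ⟨b, hb, hbe⟩ := hφK z (n+1)
    exact havoid n y z hnne a ha b hb (by rw [hae, hbe]; exact hmem')
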